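/- The matrix 𝒜 on I² × ℰ* (with ℰ* = ℰ ∪ {o}) defined by 𝒜((i,j,δ),(l,k,ε)) = 0 if l ≠ j, 𝒜((i,j,δ),(j,k,o)) = P(j,k), and 𝒜((i,j,δ),(j,k,ε)) = P(j,ε) μ(k) for ε ∈ ℰ, is a stochastic matrix, and η(i,j,δ) = μ(i) P(i,j) 1(δ = o) + μ(i) P(i,δ) μ(j) 1(δ ∈ ℰ) is a stationary distribution of 𝒜. -/
import Mathlib


open Finset Matrix

/-- The matrix 𝒜 on I² × ℰ* (ℰ* = ℰ ∪ {o}, modeled as Option E with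
none = o) defined by 𝒜((i,j,δ),(j,k,o)) = P(j,k), 𝒜((i,j,δ),(j,k,ε)) = P(j,ε)μ(k) for
ε ∈ ℰ (and 0 when first coordinates mismatch) is a stochastic matrix, and
η(i,j,δ) = μ(i)P(i,j)1(δ=o) + μ(i)P(i,δ)μ(j)1(δ∈ℰ) is a stationary distribution of 𝒜. -/
theorem absorbed_kernel_stochastic_and_stationary {I E : Type*} [Fintype I] [Fintype E]
    [DecidableEq I] [DecidableEq E] [Nonempty I] [Nonempty E]
    (P : Matrix (I ⊕ E) (I ⊕ E) ℝ)
    (hP0 : ∀ a b, 0 ≤ P a b)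
    (hP1 : ∀ a, ∑ b, P a b = 1)
    (habs : ∀ (ε : E) (b : I ⊕ E), P (Sum.inr ε) b = if b = Sum.inr ε then 1 else 0)
    (hirr : ∀ i j : I, ∃ n : ℕ, 0 < ((P.submatrix Sum.inl Sum.inl) ^ n) i j)
    (hsub : 0 < ∑ i : I, ∑ ε : E, P (Sum.inl i) (Sum.inr ε))
    (μ : I → ℝ) (hμ0 : ∀ i, 0 ≤ μ i) (hμ1 : ∑ i, μ i = 1)
    (γ : ℝ) (hγ : 0 < γ ∧ γ < 1)
    (hqsd : μ ᵥ* (P.submatrix Sum.inl Sum.inl) = γ • μ)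
    (A : I × I × Option E → I × I × Option E → ℝ)
    (hA : ∀ (i j l k : I) (d e : Option E),
      A (i, j, d) (l, k, e)
        = if l = j then
            (match e with
              | none => P (Sum.inl j) (Sum.inl k)
              | some ε => P (Sum.inl j) (Sum.inr ε) * μ k)
          else 0)
    (η : I × I × Option E → ℝ)
    (hη : ∀ (i j : I) (d : Option E),
      η (i, j, d)
        = match d with
          | none => μ i * P (Sum.inl i) (Sum.inl j)
          | some δ => μ i * P (Sum.inl i) (Sum.inr δ) * μ j) :
    (∀ x y, 0 ≤ A x y) ∧ (∀ x, ∑ y, A x y = 1) ∧ (∑ x, η x = 1)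
      ∧ (∀ y, ∑ x, η x * A x y = η y) := by
  have hrow : ∀ j : I, ∑ k : I, P (Sum.inl j) (Sum.inl k)
      + ∑ ε : E, P (Sum.inl j) (Sum.inr ε) = 1 := by
    intro j
    have := hP1 (Sum.inl j)
    rwa [Fintype.sum_sum_type] at this
  have hq : ∀ l, ∑ i, μ i * P (Sum.inl i) (Sum.inl l) = γ * μ l := by
    intro l
    have h := congrFun hqsd l
    simpa [Matrix.vecMul, dotProduct, Matrix.submatrix] using h
  have hγsum : ∑ i, μ i * ∑ k : I, P (Sum.inl i) (Sum.inl k) = γ := by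
    simp_rw [Finset.mul_sum]
    rw [Finset.sum_comm]
    simp_rw [hq]
    rw [← Finset.mul_sum, hμ1, mul_one]
  have hEsum : ∑ i, μ i * ∑ ε : E, P (Sum.inl i) (Sum.inr ε) = 1 - γ := by
    have key : ∀ i ∈ Finset.univ, μ i * ∑ ε : E, P (Sum.inl i) (Sum.inr ε)
        = μ i - μ i * ∑ k : I, P (Sum.inl i) (Sum.inl k) := by
      intro i _
      linear_combination μ i * hrow i
    rw [Finset.sum_congr rfl key, Finset.sum_sub_distrib, hμ1, hγsum]
  have hmass : ∀ l, (∑ i, η (i, l, none)) + ∑ i, ∑ δ : E, η (i, l, some δ) = μ l := by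
    intro l
    simp_rw [hη]
    rw [hq l]
    have h2 : ∑ i, ∑ δ : E, μ i * P (Sum.inl i) (Sum.inr δ) * μ l
        = (∑ i, μ i * ∑ δ : E, P (Sum.inl i) (Sum.inr δ)) * μ l := by
      rw [Finset.sum_mul]
      refine Finset.sum_congr rfl fun i _ => ?_
      rw [Finset.mul_sum, Finset.sum_mul]
    rw [h2, hEsum]
    ring
  refine ⟨?_, ?_, ?_, ?_⟩
  · rintro ⟨i, j, d⟩ ⟨l, k, e⟩
    rw [hA]
    split_ifs with h
    · rcases e with _ | ε
      · exact hP0 _ _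
      · exact mul_nonneg (hP0 _ _) (hμ0 _)
    · exact le_refl 0
  · rintro ⟨i, j, d⟩
    rw [Fintype.sum_prod_type]
    simp_rw [Fintype.sum_prod_type, hA]
    rw [Finset.sum_eq_single j]
    · simp only [if_pos rfl, if_true]
      simp_rw [Fintype.sum_option]
      rw [Finset.sum_add_distrib]
      have h2 : ∑ k : I, ∑ ε : E, P (Sum.inl j) (Sum.inr ε) * μ k
          = ∑ ε : E, P (Sum.inl j) (Sum.inr ε) := by
        rw [Finset.sum_comm]
        refine Finset.sum_congr rfl fun ε _ => ?_
        rw [← Finset.mul_sum, hμ1, mul_one]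
      rw [h2, hrow j]
    · intro l _ hl
      simp [if_neg hl]
    · intro h
      exact absurd (Finset.mem_univ j) h
  · rw [Fintype.sum_prod_type]
    simp_rw [Fintype.sum_prod_type]
    rw [Finset.sum_comm]
    simp_rw [Fintype.sum_option]
    have key : ∀ l ∈ Finset.univ, (∑ i, (η (i, l, none) + ∑ δ : E, η (i, l, some δ))) = μ l := by
      intro l _
      rw [Finset.sum_add_distrib]
      exact hmass l
    rw [Finset.sum_congr rfl key, hμ1]
  · rintro ⟨l, k, e⟩
    have hfac : ∀ c : ℝ, ∑ i, ∑ d : Option E, η (i, l, d) * c = μ l * c := by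
      intro c
      simp_rw [← Finset.sum_mul]
      congr 1
      simp_rw [Fintype.sum_option]
      rw [Finset.sum_add_distrib]
      exact hmass l
    rw [Fintype.sum_prod_type]
    simp_rw [Fintype.sum_prod_type, hA, mul_ite, mul_zero]
    rw [Finset.sum_comm]
    simp_rw [Finset.sum_ite_irrel, Finset.sum_const_zero]
    rw [Finset.sum_ite_eq Finset.univ l, if_pos (Finset.mem_univ l)]
    rcases e with _ | ε
    · rw [hfac, hη]
    · rw [hfac, hη]
      ring
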